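/- If Player 1 follows the attractor strategy from a marking whose attractor position vector is P, and a game step occurs in which at least one atom controlled by Player 1 occurs, then the attractor position vector P' of the resulting marking satisfies P' ≺ P (componentwise ≤ with strict decrease in some component). -/

import Mathlib

structure Negotiation (A Atom Out : Type*) where
  n0 : Atom
  nf : Atom
  parties : Atom → Finset A
  parties_nonempty : ∀ n, (parties n).Nonempty
  mem_n0 : ∀ a, a ∈ parties n0
  mem_nf : ∀ a, a ∈ parties nf
  outcomes : Atom → Finset Out
  outcomes_nonempty : ∀ n, (outcomes n).Nonempty
  X : Atom → A → Out → Set Atom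
  Xf_empty : ∀ a r, X nf a r = ∅
  X_nonempty : ∀ n a r, n ≠ nf → a ∈ parties n → r ∈ outcomes n → (X n a r).Nonempty

namespace Negotiation

variable {A Atom Out : Type*}

/-- A marking `x` enables atom `n` iff every party of `n` is ready to engage in `n`. -/
def Enables (N : Negotiation A Atom Out) (x : A → Set Atom) (n : Atom) : Prop :=
  ∀ a ∈ N.parties n, n ∈ x a

open Classical in
/-- The marking obtained from `x` by the occurrence of `(n, r)`. -/
noncomputable def step (N : Negotiation A Atom Out) (x : A → Set Atom) (n : Atom) (r : Out) :
    A → Set Atom :=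
  fun a => if a ∈ N.parties n then N.X n a r else x a

/-- The initial marking. -/
def x0 (N : Negotiation A Atom Out) : A → Set Atom := fun _ => {N.n0}

/-- The final marking. -/
def xf (N : Negotiation A Atom Out) : A → Set Atom := fun _ => ∅

/-- Reachability by a finite occurrence sequence. -/
inductive Reach (N : Negotiation A Atom Out) : (A → Set Atom) → (A → Set Atom) → Prop
  | refl (x : A → Set Atom) : Reach N x x
  | tail {x y : A → Set Atom} (n : Atom) (r : Out) :
      Reach N x y → N.Enables y n → r ∈ N.outcomes n → Reach N x (N.step y n r)

/-- An agent is deterministic if it is always ready to engage in exactly one atom. -/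
def Det (N : Negotiation A Atom Out) (a : A) : Prop :=
  ∀ n r, n ≠ N.nf → a ∈ N.parties n → r ∈ N.outcomes n → ∃ m, N.X n a r = {m}

/-- Weakly deterministic type 2: every atom has a deterministic party. -/
def WD2 (N : Negotiation A Atom Out) : Prop :=
  ∀ n : Atom, ∃ a ∈ N.parties n, N.Det a

/-- Soundness: every atom can be enabled, and every occurrence sequence can be
extended to reach the final marking. -/
def Sound (N : Negotiation A Atom Out) : Prop :=
  (∀ n : Atom, ∃ x, N.Reach N.x0 x ∧ N.Enables x n) ∧
  (∀ x, N.Reach N.x0 x → N.Reach x N.xf)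

/-- A set of atoms is independent if no two distinct atoms share an agent. -/
def Indep (N : Negotiation A Atom Out) (S : Finset Atom) : Prop :=
  ∀ n ∈ S, ∀ n' ∈ S, n ≠ n' → Disjoint (N.parties n) (N.parties n')

open Classical in
/-- Simultaneous occurrence of an independent set `S` of atoms, with outcomes `F`. -/
noncomputable def execSet (N : Negotiation A Atom Out) (x : A → Set Atom)
    (S : Finset Atom) (F : Atom → Out) : A → Set Atom :=
  fun a => if ∃ n ∈ S, a ∈ N.parties n
    then ⋃ n ∈ S.filter (fun n => a ∈ N.parties n), N.X n a (F n)
    else x a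

/-- One step of the attractor construction (`N1` = atoms of Player 1). -/
def AttStep (N : Negotiation A Atom Out) (N1 : Set Atom) (T : Set Atom) : Set Atom :=
  T ∪ {n | n ∈ N1 ∧ ∃ r ∈ N.outcomes n, ∀ a ∈ N.parties n, N.Det a → N.X n a r ⊆ T}
    ∪ {n | n ∉ N1 ∧ ∀ r ∈ N.outcomes n, ∀ a ∈ N.parties n, N.Det a → N.X n a r ⊆ T}

/-- The attractor sequence `A_k` of the final atom. -/
def Att (N : Negotiation A Atom Out) (N1 : Set Atom) : ℕ → Set Atom
  | 0 => {N.nf}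
  | k + 1 => N.AttStep N1 (N.Att N1 k)

/-- The attractor of the final atom. -/
def attractor (N : Negotiation A Atom Out) (N1 : Set Atom) : Set Atom :=
  ⋃ k, N.Att N1 k

/-- The attractor index of an atom: the least `k` with `n ∈ A_k`. -/
noncomputable def attIdx (N : Negotiation A Atom Out) (N1 : Set Atom) (n : Atom) : ℕ :=
  sInf {k | n ∈ N.Att N1 k}

/-- The sequence of markings along a play of the termination game. -/
noncomputable def playMarks (N : Negotiation A Atom Out)
    (p : ℕ → Option (Finset Atom × (Atom → Out))) : ℕ → (A → Set Atom)
  | 0 => N.x0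
  | k + 1 =>
    match p k with
    | some SF => N.execSet (playMarks N p k) SF.1 SF.2
    | none => playMarks N p k

/-- Validity of a play: at each step the Scheduler picks a nonempty independent set of
enabled atoms with outcomes chosen for them; the play stops only at markings
enabling no atom. -/
def ValidPlay (N : Negotiation A Atom Out)
    (p : ℕ → Option (Finset Atom × (Atom → Out))) : Prop :=
  ∀ k, (∀ S F, p k = some (S, F) →
          S.Nonempty ∧ N.Indep S ∧ ∀ n ∈ S, N.Enables (N.playMarks p k) n ∧ F n ∈ N.outcomes n)
    ∧ (p k = none → p (k + 1) = none ∧ ∀ n, ¬ N.Enables (N.playMarks p k) n)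

/-- A play ends with the occurrence of the final atom. -/
def EndsWithFinal (N : Negotiation A Atom Out)
    (p : ℕ → Option (Finset Atom × (Atom → Out))) : Prop :=
  ∃ k S F, p k = some (S, F) ∧ N.nf ∈ S

end Negotiation

namespace Negotiation

variable {A Atom Out : Type*}

/-- The attractor position of an agent at a marking: the least `k` such that the
agent is only ready for atoms of `A_k`. -/
noncomputable def posOf (N : Negotiation A Atom Out) (N1 : Set Atom)
    (x : A → Set Atom) (a : A) : ℕ :=
  sInf {k | x a ⊆ N.Att N1 k}

end Negotiation


namespace Negotiation

variable {A Atom Out : Type*}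

lemma att_mono (N : Negotiation A Atom Out) (N1 : Set Atom) : Monotone (N.Att N1) := by
  apply monotone_nat_of_le_succ
  intro k m hm
  exact Or.inl (Or.inl hm)

lemma mem_att_attIdx (N : Negotiation A Atom Out) (N1 : Set Atom) {m : Atom}
    (hm : m ∈ N.attractor N1) : m ∈ N.Att N1 (N.attIdx N1 m) := by
  have : {k | m ∈ N.Att N1 k}.Nonempty := by
    obtain ⟨k, hk⟩ := Set.mem_iUnion.mp hm
    exact ⟨k, hk⟩
  exact Nat.sInf_mem this

lemma attIdx_le (N : Negotiation A Atom Out) (N1 : Set Atom) {m : Atom} {k : ℕ}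
    (hk : m ∈ N.Att N1 k) : N.attIdx N1 m ≤ k := Nat.sInf_le hk

lemma exists_att_of_finite (N : Negotiation A Atom Out) (N1 : Set Atom) {s : Set Atom}
    (hfin : s.Finite) (hsub : s ⊆ N.attractor N1) : ∃ k, s ⊆ N.Att N1 k := by
  revert hsub
  refine Set.Finite.induction_on (motive := fun s _ => s ⊆ N.attractor N1 → ∃ k, s ⊆ N.Att N1 k) s hfin ?_ ?_
  · exact fun _ => ⟨0, by simp⟩
  · intro m s hms hsf ih hsub
    obtain ⟨k, hk⟩ := ih (fun y hy => hsub (Set.mem_insert_of_mem _ hy))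
    have hm : m ∈ N.attractor N1 := hsub (Set.mem_insert _ _)
    obtain ⟨k', hk'⟩ := Set.mem_iUnion.mp hm
    refine ⟨max k k', ?_⟩
    intro y hy
    rcases hy with rfl | hy
    · exact N.att_mono N1 (le_max_right k k') hk'
    · exact N.att_mono N1 (le_max_left k k') (hk hy)

lemma subset_att_posOf (N : Negotiation A Atom Out) (N1 : Set Atom)
    {x : A → Set Atom} {a : A} (hfin : (x a).Finite) (hsub : x a ⊆ N.attractor N1) :
    x a ⊆ N.Att N1 (N.posOf N1 x a) :=
  Nat.sInf_mem (N.exists_att_of_finite N1 hfin hsub)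

end Negotiation

open Negotiation in
/-- if Player 1 follows the attractor strategy and a game step occurs
(in which at least one atom controlled by Player 1 occurs), then the attractor
position vector strictly decreases: every deterministic agent's position is
non-increasing and some deterministic agent's position strictly decreases. -/
theorem position_vector_decreases {A Atom Out : Type*}
    (N : Negotiation A Atom Out) (N1 : Set Atom) (hW : N.WD2)
    (x : A → Set Atom)
    (hx : ∀ a, N.Det a → x a ⊆ N.attractor N1 ∧ (x a).Finite)
    (S : Finset Atom) (hSne : S.Nonempty) (hind : N.Indep S)
    (hen : ∀ n ∈ S, N.Enables x n)
    (F : Atom → Out) (hF : ∀ n ∈ S, F n ∈ N.outcomes n)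
    (hnfS : N.nf ∉ S)
    (hP1 : ∃ n ∈ S, n ∈ N1)
    (hstrat : ∀ n ∈ S, n ∈ N1 → ∀ a ∈ N.parties n, N.Det a →
      ∀ m ∈ N.X n a (F n), m ∈ N.attractor N1 ∧ N.attIdx N1 m < N.attIdx N1 n) :
    (∀ a, N.Det a → N.posOf N1 (N.execSet x S F) a ≤ N.posOf N1 x a) ∧
    (∃ a, N.Det a ∧ N.posOf N1 (N.execSet x S F) a < N.posOf N1 x a) := by
  classical
  -- key lemma: every deterministic party of an atom in S strictly decreases
  have key : ∀ n ∈ S, ∀ a ∈ N.parties n, N.Det a →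
      N.posOf N1 (N.execSet x S F) a < N.posOf N1 x a := by
    intro n hnS a ha hda
    have hne : n ≠ N.nf := fun h => hnfS (h ▸ hnS)
    -- the filter is the singleton {n}
    have hfilt : S.filter (fun n' => a ∈ N.parties n') = {n} := by
      ext n'
      simp only [Finset.mem_filter, Finset.mem_singleton]
      constructor
      · rintro ⟨hn'S, ha'⟩
        by_contra hne'
        exact Finset.disjoint_left.mp (hind n' hn'S n hnS hne') ha' ha
      · rintro rfl
        exact ⟨hnS, ha⟩
    have hx' : N.execSet x S F a = N.X n a (F n) := by
      simp only [Negotiation.execSet]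
      rw [if_pos ⟨n, hnS, ha⟩]
      rw [show (S.filter fun n' => a ∈ N.parties n') = {n} from hfilt]
      simp
    obtain ⟨m, hm⟩ := hda n (F n) hne ha (hF n hnS)
    -- m is in the attractor with strictly smaller index than n
    have hmain : m ∈ N.attractor N1 ∧ N.attIdx N1 m < N.attIdx N1 n := by
      by_cases hn1 : n ∈ N1
      · exact hstrat n hnS hn1 a ha hda m (hm ▸ rfl)
      · -- n is a Player-0 atom in the attractor
        obtain ⟨b, hb, hdb⟩ := hW n
        have hnA : n ∈ N.attractor N1 := (hx b hdb).1 (hen n hnS b hb)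
        have hnAtt : n ∈ N.Att N1 (N.attIdx N1 n) := N.mem_att_attIdx N1 hnA
        have hj0 : N.attIdx N1 n ≠ 0 := by
          intro h0
          rw [h0] at hnAtt
          exact hne hnAtt
        obtain ⟨j, hj⟩ := Nat.exists_eq_succ_of_ne_zero hj0
        rw [hj] at hnAtt
        have hnotj : n ∉ N.Att N1 j := by
          intro hmem
          have := N.attIdx_le N1 hmem
          omega
        have : N.X n a (F n) ⊆ N.Att N1 j := by
          rcases hnAtt with (hc | hc) | hc
          · exact absurd hc hnotj
          · exact absurd hc.1 hn1
          · exact hc.2 (F n) (hF n hnS) a ha hda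
        have hmj : m ∈ N.Att N1 j := this (hm ▸ rfl)
        refine ⟨Set.mem_iUnion.mpr ⟨j, hmj⟩, ?_⟩
        have := N.attIdx_le N1 hmj
        omega
    -- posOf at the new marking equals attIdx m
    have hpos' : N.posOf N1 (N.execSet x S F) a = N.attIdx N1 m := by
      unfold Negotiation.posOf Negotiation.attIdx
      congr 1
      ext k
      simp [hx', hm, Set.singleton_subset_iff]
    -- attIdx n ≤ posOf x a
    have hle : N.attIdx N1 n ≤ N.posOf N1 x a := by
      apply N.attIdx_le N1
      exact N.subset_att_posOf N1 (hx a hda).2 (hx a hda).1 (hen n hnS a ha)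
    rw [hpos']
    exact lt_of_lt_of_le hmain.2 hle
  constructor
  · intro a hda
    by_cases h : ∃ n ∈ S, a ∈ N.parties n
    · obtain ⟨n, hnS, ha⟩ := h
      exact le_of_lt (key n hnS a ha hda)
    · have : N.execSet x S F a = x a := by
        simp only [Negotiation.execSet]
        rw [if_neg h]
      unfold Negotiation.posOf
      rw [this]
  · obtain ⟨n, hnS, _⟩ := hP1
    obtain ⟨a, ha, hda⟩ := hW n
    exact ⟨a, hda, key n hnS a ha hda⟩
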